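/- arXiv:2109.01224 — 8 statements merged into one kernel-verified Lean document; each statement's English description precedes it below -/
import Mathlib

section
/- Let B(X, X, E_A) be the bipartite graph associated with a digraph D([A]) on state set X, and suppose every maximum matching of B has at least one right unmatched vertex lying in a fixed subset X_att ⊆ X. Then for any matrix structure [B_def] whose edges only enter vertices of X_def = X \ X_att, some maximum matching of the bipartite graph of ([A],[B_def]) leaves a vertex of X_att unmatched; consequently the configuration cannot satisfy the matching condition for structural controllability using inputs connected only to X_def. -/
open scoped Classical

noncomputable section

/-- A set of edges in a bipartite graph (edges from left type `L` to right type `R`)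
is a matching if no two distinct edges share a left or a right vertex. -/
def IsMatching {L R : Type*} (M : Finset (L × R)) : Prop :=
  ∀ e ∈ M, ∀ f ∈ M, e ≠ f → e.1 ≠ f.1 ∧ e.2 ≠ f.2

/-- `M` is a matching of the bipartite graph with edge set `Ed`. -/
def IsMatchingOf {L R : Type*} (Ed M : Finset (L × R)) : Prop :=
  M ⊆ Ed ∧ IsMatching M

/-- `M` is a maximum matching of the bipartite graph with edge set `Ed`. -/
def IsMaxMatching {L R : Type*} (Ed M : Finset (L × R)) : Prop :=
  IsMatchingOf Ed M ∧ ∀ M', IsMatchingOf Ed M' → M'.card ≤ M.card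

/-- The right vertices left unmatched by the matching `M`. -/
def unmatchedR {L R : Type*} [Fintype R] (M : Finset (L × R)) : Finset R :=
  Finset.univ.filter (fun r => ∀ e ∈ M, e.2 ≠ r)

/-- The maximum matching number of the bipartite graph with edge set `Ed`. -/
def matchNum {L R : Type*} (Ed : Finset (L × R)) : ℕ :=
  (Ed.powerset.filter IsMatching).sup Finset.card

/-- The bipartite graph of the concatenation `[[A],[B]]`: left vertices are the columns of
`[A]` (states) together with the columns of `[B]` (inputs), right vertices are the states. -/
def concatAB {X I : Type*} [DecidableEq X] [DecidableEq I]
    (EA : Finset (X × X)) (EB : Finset (I × X)) : Finset ((X ⊕ I) × X) :=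
  EA.image (fun e => (Sum.inl e.1, e.2)) ∪ EB.image (fun e => (Sum.inr e.1, e.2))

section Aux
variable {L R : Type*}

lemma card_image_fst {M : Finset (L × R)} (h : IsMatching M) :
    (M.image Prod.fst).card = M.card := by
  rw [Finset.card_image_of_injOn]
  intro e he f hf hef
  by_contra hne
  exact (h e he f hf hne).1 hef

lemma aug (Ed : Finset (L × R)) :
    ∀ (n : ℕ) (M N : Finset (L × R)), (N \ M).card ≤ n →
      M ⊆ Ed → N ⊆ Ed → IsMatching M → IsMatching N → M.card < N.card →
      ∃ M', M' ⊆ Ed ∧ IsMatching M' ∧ M'.card = M.card + 1 ∧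
        ∀ r, (∃ e ∈ M, e.2 = r) → (∃ e ∈ M', e.2 = r) := by
  intro n
  induction n with
  | zero =>
    intro M N hle _ _ _ _ hcard
    have : N ⊆ M := by
      intro e he
      by_contra hne
      have : e ∈ N \ M := Finset.mem_sdiff.mpr ⟨he, hne⟩
      have := Finset.card_pos.mpr ⟨e, this⟩
      omega
    exact absurd (Finset.card_le_card this) (by omega)
  | succ n ih =>
    intro M N hle hMs hNs hM hN hcard
    -- find a left vertex covered by N but not by M
    have hcards : (M.image Prod.fst).card < (N.image Prod.fst).card := by
      rw [card_image_fst hM, card_image_fst hN]; exact hcard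
    have : ¬ (N.image Prod.fst ⊆ M.image Prod.fst) := fun h =>
      absurd (Finset.card_le_card h) (by omega)
    obtain ⟨l0, hl0N, hl0M⟩ := Finset.not_subset.mp this
    obtain ⟨e1, he1N, he1⟩ := Finset.mem_image.mp hl0N
    obtain ⟨l1, r1⟩ := e1
    simp only at he1
    subst he1
    have hl1M : l1 ∉ M.image Prod.fst := hl0M
    have hl1M' : ∀ e ∈ M, e.1 ≠ l1 := by
      intro e he h
      exact hl1M (Finset.mem_image.mpr ⟨e, he, h⟩)
    by_cases hr1 : ∃ e ∈ M, e.2 = r1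
    · -- r1 is matched in M by some (l2, r1); swap it to (l1, r1) and recurse
      obtain ⟨e2, he2M, he2⟩ := hr1
      obtain ⟨l2, r2⟩ := e2
      simp only at he2
      have he2' : r1 = r2 := he2.symm
      subst he2'
      have hl2l1 : l2 ≠ l1 := fun h => hl1M' _ he2M h
      set M₁ : Finset (L × R) := insert (l1, r1) (M.erase (l2, r1)) with hM₁def
      have hnotmem : (l1, r1) ∉ M := fun h => hl1M' _ h rfl
      have hM₁sub : M₁ ⊆ Ed := by
        intro e he
        rcases Finset.mem_insert.mp he with h | h
        · exact h ▸ hNs he1N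
        · exact hMs (Finset.mem_erase.mp h).2
      have herased : ∀ e ∈ M.erase (l2, r1), e.1 ≠ l1 ∧ e.2 ≠ r1 := by
        intro e he
        obtain ⟨hne, heM⟩ := Finset.mem_erase.mp he
        refine ⟨fun h => hl1M' _ heM h, fun h => ?_⟩
        exact (hM e heM (l2, r1) he2M hne).2 h
      have hM₁match : IsMatching M₁ := by
        intro e he f hf hef
        rcases Finset.mem_insert.mp he with he' | he' <;>
          rcases Finset.mem_insert.mp hf with hf' | hf'
        · exact absurd (he'.trans hf'.symm) hef
        · subst he'
          obtain ⟨h1, h2⟩ := herased f hf'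
          exact ⟨fun h => h1 h.symm, fun h => h2 h.symm⟩
        · subst hf'
          exact herased e he'
        · exact hM e (Finset.mem_erase.mp he').2 f (Finset.mem_erase.mp hf').2 hef
      have hM₁card : M₁.card = M.card := by
        have hni : (l1, r1) ∉ M.erase (l2, r1) := fun h => hnotmem (Finset.mem_erase.mp h).2
        rw [hM₁def, Finset.card_insert_of_notMem hni, Finset.card_erase_of_mem he2M]
        have : 0 < M.card := Finset.card_pos.mpr ⟨_, he2M⟩
        omega
      have hl2r1N : (l2, r1) ∉ N := by
        intro h
        exact hl2l1 ((hN (l2, r1) h (l1, r1) he1N (fun hh => hl2l1 (congrArg Prod.fst hh))).2 rfl).elim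
      have hmeas : (N \ M₁).card ≤ n := by
        have hsub : N \ M₁ ⊆ (N \ M).erase (l1, r1) := by
          intro e he
          obtain ⟨heN, heM₁⟩ := Finset.mem_sdiff.mp he
          refine Finset.mem_erase.mpr ⟨?_, Finset.mem_sdiff.mpr ⟨heN, ?_⟩⟩
          · rintro rfl; exact heM₁ (Finset.mem_insert_self _ _)
          · intro heM
            apply heM₁
            refine Finset.mem_insert.mpr (Or.inr (Finset.mem_erase.mpr ⟨?_, heM⟩))
            rintro rfl; exact hl2r1N heN
        have h1 : (l1, r1) ∈ N \ M := Finset.mem_sdiff.mpr ⟨he1N, hnotmem⟩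
        have := Finset.card_le_card hsub
        rw [Finset.card_erase_of_mem h1] at this
        omega
      obtain ⟨M', h1, h2, h3, h4⟩ := ih M₁ N hmeas hM₁sub hNs hM₁match hN (by omega)
      refine ⟨M', h1, h2, by omega, ?_⟩
      intro r ⟨e, heM, her⟩
      apply h4
      by_cases hrr : r = r1
      · exact ⟨(l1, r1), Finset.mem_insert_self _ _, hrr.symm⟩
      · refine ⟨e, Finset.mem_insert.mpr (Or.inr (Finset.mem_erase.mpr ⟨?_, heM⟩)), her⟩
        rintro rfl; exact hrr her.symm
    · -- r1 unmatched in M: just insert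
      push_neg at hr1
      have hnotmem : (l1, r1) ∉ M := fun h => hl1M' _ h rfl
      refine ⟨insert (l1, r1) M, ?_, ?_, Finset.card_insert_of_notMem hnotmem, ?_⟩
      · intro e he
        rcases Finset.mem_insert.mp he with h | h
        · exact h ▸ hNs he1N
        · exact hMs h
      · intro e he f hf hef
        rcases Finset.mem_insert.mp he with he' | he' <;>
          rcases Finset.mem_insert.mp hf with hf' | hf'
        · exact absurd (he'.trans hf'.symm) hef
        · subst he'
          exact ⟨fun h => hl1M' f hf' h.symm, fun h => hr1 f hf' h.symm⟩
        · subst hf'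
          exact ⟨hl1M' e he', hr1 e he'⟩
        · exact hM e he' f hf' hef
      · intro r ⟨e, heM, her⟩
        exact ⟨e, Finset.mem_insert_of_mem heM, her⟩

lemma exists_larger {Ed M : Finset (L × R)} (hM : IsMatchingOf Ed M)
    (h : ¬ IsMaxMatching Ed M) : ∃ N, IsMatchingOf Ed N ∧ M.card < N.card := by
  rw [IsMaxMatching] at h
  push_neg at h
  obtain ⟨N, hN, hc⟩ := h hM
  exact ⟨N, hN, hc⟩

lemma exists_max_covering (Ed : Finset (L × R)) :
    ∀ (n : ℕ) (M : Finset (L × R)), Ed.card - M.card ≤ n → IsMatchingOf Ed M →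
      ∃ M', IsMaxMatching Ed M' ∧ ∀ r, (∃ e ∈ M, e.2 = r) → (∃ e ∈ M', e.2 = r) := by
  intro n
  induction n with
  | zero =>
    intro M hle hM
    refine ⟨M, ⟨hM, fun M' hM' => ?_⟩, fun r hr => hr⟩
    have := Finset.card_le_card hM'.1
    have := Finset.card_le_card hM.1
    omega
  | succ n ih =>
    intro M hle hM
    by_cases hmax : IsMaxMatching Ed M
    · exact ⟨M, hmax, fun r hr => hr⟩
    · obtain ⟨N, hN, hc⟩ := exists_larger hM hmax
      obtain ⟨M₁, h1, h2, h3, h4⟩ :=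
        aug Ed (N \ M).card M N le_rfl hM.1 hN.1 hM.2 hN.2 hc
      have hM₁le : M₁.card ≤ Ed.card := Finset.card_le_card h1
      obtain ⟨M', hmax', hcov⟩ := ih M₁ (by omega) ⟨h1, h2⟩
      exact ⟨M', hmax', fun r hr => hcov r (h4 r hr)⟩

lemma exists_max (Ed : Finset (L × R)) : ∃ M, IsMaxMatching Ed M := by
  have hempty : IsMatchingOf Ed (∅ : Finset (L × R)) :=
    ⟨Finset.empty_subset _, fun e he => absurd he (Finset.notMem_empty e)⟩
  obtain ⟨M, hM, _⟩ := exists_max_covering Ed Ed.card ∅ (by simp) hempty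
  exact ⟨M, hM⟩

lemma mem_unmatchedR [Fintype R] {M : Finset (L × R)} {r : R} :
    r ∈ unmatchedR M ↔ ∀ e ∈ M, e.2 ≠ r := by
  simp [unmatchedR]

end Aux

/-- if every maximum matching of `B([A])` has a right unmatched vertex in
`X_att`, then for any `[B_def]` whose edges only enter `X_def = X \ X_att`, some maximum
matching of the bipartite graph of `([A],[B_def])` leaves a vertex of `X_att` unmatched;
consequently no matching of that graph covers all state vertices. -/
theorem stmt_5 {X I : Type*} [Fintype X] (EA : Finset (X × X))
    (Xatt Xdef : Set X) (hpart : Xdef = Xattᶜ)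
    (hA : ∀ M : Finset (X × X), IsMaxMatching EA M → ∃ x ∈ unmatchedR M, x ∈ Xatt)
    (EBdef : Finset (I × X)) (hB : ∀ e ∈ EBdef, e.2 ∈ Xdef) :
    (∃ M : Finset ((X ⊕ I) × X), IsMaxMatching (concatAB EA EBdef) M ∧
      ∃ x ∈ unmatchedR M, x ∈ Xatt) ∧
    ¬ ∃ M : Finset ((X ⊕ I) × X), IsMatchingOf (concatAB EA EBdef) M ∧
      ∀ x : X, ∃ e ∈ M, e.2 = x := by
  have hmemA : ∀ (a x : X), ((Sum.inl a : X ⊕ I), x) ∈ concatAB EA EBdef ↔ (a, x) ∈ EA := by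
    intro a x
    simp only [concatAB, Finset.mem_union, Finset.mem_image, Prod.mk.injEq]
    constructor
    · rintro (⟨e, he, h1, h2⟩ | ⟨e, he, h1, h2⟩)
      · obtain ⟨a', x'⟩ := e
        simp only [Sum.inl.injEq] at h1
        subst h1; subst h2; exact he
      · exact absurd h1 (by simp)
    · intro h; exact Or.inl ⟨(a, x), h, rfl, rfl⟩
  have hmemB : ∀ (i : I) (x : X), ((Sum.inr i : X ⊕ I), x) ∈ concatAB EA EBdef → (i, x) ∈ EBdef := by
    intro i x h
    simp only [concatAB, Finset.mem_union, Finset.mem_image, Prod.mk.injEq] at h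
    rcases h with ⟨e, he, h1, h2⟩ | ⟨e, he, h1, h2⟩
    · exact absurd h1 (by simp)
    · obtain ⟨i', x'⟩ := e
      simp only [Sum.inr.injEq] at h1
      subst h1; subst h2; exact he
  -- Key claim: no matching of the concatenation covers Xatt on the right
  have key : ¬ ∃ M : Finset ((X ⊕ I) × X), IsMatchingOf (concatAB EA EBdef) M ∧
      ∀ x ∈ Xatt, ∃ e ∈ M, e.2 = x := by
    rintro ⟨M, ⟨hMsub, hMmatch⟩, hcov⟩
    set MA : Finset (X × X) := EA.filter (fun p => ((Sum.inl p.1 : X ⊕ I), p.2) ∈ M) with hMAdef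
    have hMAsub : MA ⊆ EA := Finset.filter_subset _ _
    have hMAmatch : IsMatching MA := by
      intro e he f hf hef
      have he' := (Finset.mem_filter.mp he).2
      have hf' := (Finset.mem_filter.mp hf).2
      have hne : ((Sum.inl e.1 : X ⊕ I), e.2) ≠ ((Sum.inl f.1 : X ⊕ I), f.2) := by
        intro h
        apply hef
        simp only [Prod.mk.injEq, Sum.inl.injEq] at h
        exact Prod.ext h.1 h.2
      have := hMmatch _ he' _ hf' hne
      simp only [Prod.mk.injEq, ne_eq, Sum.inl.injEq] at this
      exact ⟨fun h => this.1 h, this.2⟩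
    have hMAcov : ∀ x ∈ Xatt, ∃ e ∈ MA, e.2 = x := by
      intro x hx
      obtain ⟨e, heM, hex⟩ := hcov x hx
      obtain ⟨u, y⟩ := e
      simp only at hex
      have hex' : x = y := hex.symm
      subst hex'
      cases u with
      | inl a =>
        refine ⟨(a, x), Finset.mem_filter.mpr ⟨(hmemA a x).mp (hMsub heM), heM⟩, rfl⟩
      | inr i =>
        exfalso
        have : (i, x) ∈ EBdef := hmemB i x (hMsub heM)
        have hxdef : x ∈ Xdef := hB _ this
        rw [hpart] at hxdef
        exact hxdef hx
    obtain ⟨Mstar, hmax, hcov'⟩ :=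
      exists_max_covering EA EA.card MA (by omega) ⟨hMAsub, hMAmatch⟩
    obtain ⟨x, hxun, hxatt⟩ := hA Mstar hmax
    obtain ⟨e, heM, hex⟩ := hcov' x (hMAcov x hxatt)
    exact mem_unmatchedR.mp hxun e heM hex
  constructor
  · obtain ⟨M, hM⟩ := exists_max (concatAB EA EBdef)
    refine ⟨M, hM, ?_⟩
    by_contra h
    push_neg at h
    apply key
    refine ⟨M, hM.1, fun x hx => ?_⟩
    by_contra hc
    push_neg at hc
    exact h x (mem_unmatchedR.mpr fun e he => hc e he) hx
  · rintro ⟨M, hM, hall⟩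
    exact key ⟨M, hM, fun x _ => hall x⟩
end
end

section
/- (Minimum input theorem) Let m be the number of right unmatched vertices of a maximum matching of B([A]). If m > 0, then any structured input matrix [B] making ([A],[B]) structurally controllable must have at least m columns; i.e., structural controllability requires at least m inputs. -/
open scoped Classical

noncomputable section

/-- minimum input theorem: if a maximum matching of `B([A])` has `m > 0`
right unmatched vertices, then any `[B]` for which the bipartite graph of `[[A],[B]]`
has a matching covering all `n` right (state) vertices — as required for structural
controllability — must have at least `m` columns (inputs). -/
theorem stmt_7 {X I : Type*} [Fintype X] [Fintype I] (EA : Finset (X × X))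
    (EB : Finset (I × X)) (m : ℕ) (hm : m = Fintype.card X - matchNum EA) (hm0 : 0 < m)
    (hcov : ∃ M : Finset ((X ⊕ I) × X), IsMatchingOf (concatAB EA EB) M ∧
      ∀ x : X, ∃ e ∈ M, e.2 = x) :
    m ≤ Fintype.card I := by
  obtain ⟨M, ⟨hsub, hmat⟩, hcov⟩ := hcov
  -- |M| = card X
  have hinj : Set.InjOn Prod.snd (M : Set ((X ⊕ I) × X)) := by
    intro e he f hf hef
    by_contra hne
    exact (hmat e he f hf hne).2 hef
  have himg : M.image Prod.snd = Finset.univ := by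
    apply Finset.eq_univ_of_forall
    intro x
    obtain ⟨e, he, hx⟩ := hcov x
    exact Finset.mem_image.2 ⟨e, he, hx⟩
  have hcardM : M.card = Fintype.card X := by
    rw [← Finset.card_image_of_injOn hinj, himg, Finset.card_univ]
  -- split M
  set MA := M.filter (fun e => e.1.isLeft) with hMA
  set MB := M.filter (fun e => ¬ e.1.isLeft) with hMB
  have hsplit : MA.card + MB.card = M.card := Finset.card_filter_add_card_filter_not _
  -- MB.card ≤ card I
  have hMBle : MB.card ≤ Fintype.card I := by
    have hinj1 : Set.InjOn Prod.fst (MB : Set ((X ⊕ I) × X)) := by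
      intro e he f hf hef
      by_contra hne
      exact (hmat e (Finset.mem_of_mem_filter _ he) f (Finset.mem_of_mem_filter _ hf) hne).1 hef
    calc MB.card = (MB.image Prod.fst).card := (Finset.card_image_of_injOn hinj1).symm
      _ ≤ ((Finset.univ : Finset I).image Sum.inr).card := by
          apply Finset.card_le_card
          intro v hv
          obtain ⟨e, he, hv'⟩ := Finset.mem_image.1 hv
          have : ¬ e.1.isLeft := (Finset.mem_filter.1 he).2
          obtain ⟨i, hi⟩ : ∃ i, e.1 = Sum.inr i := by
            cases h : e.1 with
            | inl a => rw [h] at this; simp at this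
            | inr i => exact ⟨i, rfl⟩
          exact Finset.mem_image.2 ⟨i, Finset.mem_univ i, by rw [← hi, hv']⟩
      _ = Fintype.card I := by rw [Finset.card_image_of_injective _ Sum.inr_injective, Finset.card_univ]
  -- MA.card ≤ matchNum EA
  have hMAle : MA.card ≤ matchNum EA := by
    classical
    set h : (X ⊕ I) × X → Option (X × X) := fun e =>
      match e.1 with
      | Sum.inl a => some (a, e.2)
      | Sum.inr _ => none with hh
    have hinjopt : ∀ a a' b, b ∈ h a → b ∈ h a' → a = a' := by
      rintro ⟨u, x⟩ ⟨u', x'⟩ b hb hb'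
      cases u with
      | inl a =>
        cases u' with
        | inl a' =>
          simp only [hh, Option.mem_def, Option.some.injEq] at hb hb'
          rw [← hb'] at hb
          obtain ⟨h1, h2⟩ := Prod.mk.injEq .. ▸ hb
          simp_all
        | inr i' => simp [hh] at hb'
      | inr i => simp [hh] at hb
    set M' := M.filterMap h hinjopt with hM'
    have hmemM' : ∀ p : X × X, p ∈ M' ↔ (Sum.inl p.1, p.2) ∈ M := by
      intro p
      rw [hM', Finset.mem_filterMap]
      constructor
      · rintro ⟨⟨u, x⟩, he, hp⟩
        cases u with
        | inl a =>
          simp only [hh, Option.some.injEq] at hp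
          subst hp; exact he
        | inr i => simp [hh] at hp
      · intro hmem
        exact ⟨(Sum.inl p.1, p.2), hmem, by simp [hh]⟩
    -- M' is a matching of EA
    have hM'sub : M' ⊆ EA := by
      intro p hp
      have := hsub ((hmemM' p).1 hp)
      rw [concatAB, Finset.mem_union] at this
      rcases this with h1 | h1
      · obtain ⟨e, he, heq⟩ := Finset.mem_image.1 h1
        obtain ⟨h2, h3⟩ := Prod.mk.injEq .. ▸ heq
        have : e.1 = p.1 := Sum.inl_injective h2
        have : e = p := Prod.ext this h3
        rwa [← this]
      · obtain ⟨e, _, heq⟩ := Finset.mem_image.1 h1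
        simp [Prod.ext_iff] at heq
    have hM'mat : IsMatching M' := by
      intro p hp q hq hpq
      have hpM := (hmemM' p).1 hp
      have hqM := (hmemM' q).1 hq
      have hne : ((Sum.inl p.1 : X ⊕ I), p.2) ≠ (Sum.inl q.1, q.2) := by
        intro hcontra
        apply hpq
        obtain ⟨h1, h2⟩ := Prod.mk.injEq .. ▸ hcontra
        exact Prod.ext (Sum.inl_injective h1) h2
      obtain ⟨h1, h2⟩ := hmat _ hpM _ hqM hne
      exact ⟨fun hc => h1 (by rw [hc]), h2⟩
    have hMAcard : MA.card ≤ M'.card := by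
      have : MA ⊆ M'.image (fun p => (Sum.inl p.1, p.2)) := by
        intro e he
        have heM : e ∈ M := Finset.mem_of_mem_filter _ he
        have : e.1.isLeft := (Finset.mem_filter.1 he).2
        obtain ⟨a, ha⟩ : ∃ a, e.1 = Sum.inl a := by
          cases h' : e.1 with
          | inl a => exact ⟨a, rfl⟩
          | inr i => rw [h'] at this; simp at this
        refine Finset.mem_image.2 ⟨(a, e.2), ?_, ?_⟩
        · exact (hmemM' (a, e.2)).2 (by rw [← ha]; exact heM)
        · simp [← ha]
      calc MA.card ≤ (M'.image (fun p => (Sum.inl p.1, p.2))).card := Finset.card_le_card this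
        _ ≤ M'.card := Finset.card_image_le
    have : M'.card ≤ matchNum EA := by
      apply Finset.le_sup
      exact Finset.mem_filter.2 ⟨Finset.mem_powerset.2 hM'sub, hM'mat⟩
    omega
  omega
end
end

section
/- (DoS resilience, necessity) Suppose the defender's inputs u_def can only be connected to states in X_def. If the digraph D([A]) has a non-top-linked SCC all of whose vertices lie in X_att, then the system ([A],[B_def]) is not structurally controllable for any choice of [B_def] supported on X_def; i.e., the system is not structurally resilient to the DoS attack. -/
/-- Reachability by directed paths (possibly of length zero). -/
def Reach {V : Type*} (E : V → V → Prop) : V → V → Prop := Relation.ReflTransGen E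

/-- `S` is a strongly connected component of the digraph with edge relation `E`:
a maximal nonempty set of mutually reachable vertices. -/
def IsSCC {V : Type*} (E : V → V → Prop) (S : Set V) : Prop :=
  S.Nonempty ∧ (∀ a ∈ S, ∀ b ∈ S, Reach E a b) ∧
    ∀ T : Set V, S ⊆ T → (∀ a ∈ T, ∀ b ∈ T, Reach E a b) → T = S

/-- A non-top-linked (source) SCC: an SCC with no incoming edge from outside. -/
def NonTopLinked {V : Type*} (E : V → V → Prop) (S : Set V) : Prop :=
  IsSCC E S ∧ ∀ u v, v ∈ S → u ∉ S → ¬ E u v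

/-- DoS resilience, necessity: if `D([A])` has a non-top-linked SCC whose
vertices all lie in `X_att`, then no `[B_def]` supported on `X_def` can make every state
reachable from the defender's inputs; the system is not structurally resilient. -/
theorem stmt_9 {X I : Type*} [Fintype X] (A : X → X → Prop)
    (Xdef Xatt : Set X) (hpart : Xdef = Xattᶜ)
    (S : Set X) (hS : NonTopLinked A S) (hSatt : S ⊆ Xatt) :
    ∀ Bdef : I → X → Prop, (∀ i x, Bdef i x → x ∈ Xdef) →
      ¬ ∀ x : X, ∃ i, ∃ x₀, Bdef i x₀ ∧ Reach A x₀ x := by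
  intro Bdef hB hall
  obtain ⟨⟨⟨s, hs⟩, _, _⟩, hin⟩ := hS
  obtain ⟨i, x₀, hb, hreach⟩ := hall s
  have key : ∀ u v, Reach A u v → v ∈ S → u ∈ S := by
    intro u v h
    induction h using Relation.ReflTransGen.head_induction_on with
    | refl => exact fun h => h
    | head hab _ ih =>
      intro hv
      by_contra hu
      exact hin _ _ (ih hv) hu hab
  have hx₀S : x₀ ∈ S := key _ _ hreach hs
  have : x₀ ∈ Xdef := hB i x₀ hb
  rw [hpart] at this
  exact this (hSatt hx₀S)
end

section
/- (Integrity attack resilience) Suppose attacker inputs u_att can be connected only to states in X_att. If every maximum matching of B([A_def]) has some right unmatched vertex in X_def, or some non-top-linked SCC of D([A_def]) consists exclusively of X_def vertices, then for every [B_att] supported on X_att, the pair ([A_def],[B_att]) is not structurally controllable. -/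
open scoped Classical

noncomputable section

/-- The digraph relation of a structured matrix given by its edge set:
an edge from `a` to `b` iff `(a, b)` is a free entry (column `a`, row `b`). -/
def digraphRel {X : Type*} (A : Finset (X × X)) : X → X → Prop := fun a b => (a, b) ∈ A

/-- Graph-theoretic criterion for structural controllability of `([A],[B])`:
every right unmatched vertex of some maximum matching of `B([A])` is connected to a
distinct input, and every non-top-linked SCC of `D([A])` has a vertex connected to
some input. -/
def StructCont {X I : Type*} [Fintype X] (A : Finset (X × X)) (B : Finset (I × X)) : Prop :=
  (∃ M : Finset (X × X), IsMaxMatching A M ∧ ∃ f : X → I,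
      Set.InjOn f ↑(unmatchedR M) ∧ ∀ x ∈ unmatchedR M, (f x, x) ∈ B) ∧
  (∀ S : Set X, NonTopLinked (digraphRel A) S → ∃ x ∈ S, ∃ i : I, (i, x) ∈ B)

/-- integrity attack resilience: if every maximum matching of `B([A_def])`
has a right unmatched vertex in `X_def`, or some non-top-linked SCC of `D([A_def])`
consists exclusively of `X_def` vertices, then no attacker matrix `[B_att]` supported on
`X_att` makes `([A_def],[B_att])` structurally controllable. -/
theorem stmt_11 {X I : Type*} [Fintype X] (Adef : Finset (X × X))
    (Xdef Xatt : Set X) (hpart : Xdef = Xattᶜ)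
    (h : (∀ M : Finset (X × X), IsMaxMatching Adef M → ∃ x ∈ unmatchedR M, x ∈ Xdef) ∨
         (∃ S : Set X, NonTopLinked (digraphRel Adef) S ∧ S ⊆ Xdef)) :
    ∀ Batt : Finset (I × X), (∀ e ∈ Batt, e.2 ∈ Xatt) → ¬ StructCont Adef Batt := by
  intro Batt hB ⟨⟨M, hM, f, hinj, hf⟩, hscc⟩
  rcases h with h | ⟨S, hS, hSdef⟩
  · obtain ⟨x, hx, hxdef⟩ := h M hM
    exact (hpart ▸ hxdef) (hB _ (hf x hx))
  · obtain ⟨x, hxS, i, hi⟩ := hscc S hS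
    exact (hpart ▸ hSdef hxS) (hB _ hi)
end
end

section
/- (Complete controllability by attacker) With attacker inputs connectable only to X_att, there exists [B_att] supported on X_att such that ([A_def],[B_att]) is structurally controllable if and only if some maximum matching of B([A_def]) has all its right unmatched vertices in X_att and every non-top-linked SCC of D([A_def]) contains at least one vertex of X_att. -/
open scoped Classical

noncomputable section

/-- complete controllability by the attacker: there exists an attacker
input structure `[B_att]` supported on `X_att` making `([A_def],[B_att])` structurally
controllable iff some maximum matching of `B([A_def])` has all right unmatched vertices
in `X_att` and every non-top-linked SCC of `D([A_def])` contains an `X_att` vertex. -/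
theorem stmt_12 {X : Type*} [Fintype X] (Adef : Finset (X × X))
    (Xdef Xatt : Set X) (hpart : Xdef = Xattᶜ) :
    (∃ (a : ℕ) (Batt : Finset (Fin a × X)),
        (∀ e ∈ Batt, e.2 ∈ Xatt) ∧ StructCont Adef Batt) ↔
    ((∃ M : Finset (X × X), IsMaxMatching Adef M ∧ ∀ x ∈ unmatchedR M, x ∈ Xatt) ∧
     (∀ S : Set X, NonTopLinked (digraphRel Adef) S → ∃ x ∈ S, x ∈ Xatt)) := by
  constructor
  · rintro ⟨a, Batt, hsupp, ⟨M, hM, f, hinj, hf⟩, hscc⟩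
    refine ⟨⟨M, hM, fun x hx => hsupp _ (hf x hx)⟩, fun S hS => ?_⟩
    obtain ⟨x, hxS, i, hi⟩ := hscc S hS
    exact ⟨x, hxS, hsupp _ hi⟩
  · rintro ⟨⟨M, hM, hMatt⟩, hscc⟩
    set e := Fintype.equivFin X
    refine ⟨Fintype.card X,
      (Finset.univ.filter (fun x => x ∈ Xatt)).image (fun x => (e x, x)), ?_, ?_, ?_⟩
    · intro p hp
      obtain ⟨y, hy, rfl⟩ := Finset.mem_image.mp hp
      exact (Finset.mem_filter.mp hy).2
    · refine ⟨M, hM, fun x => e x, fun x _ y _ h => e.injective h, fun x hx => ?_⟩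
      exact Finset.mem_image.mpr ⟨x, Finset.mem_filter.mpr ⟨Finset.mem_univ _, hMatt x hx⟩, rfl⟩
    · intro S hS
      obtain ⟨x, hxS, hxA⟩ := hscc S hS
      exact ⟨x, hxS, e x,
        Finset.mem_image.mpr ⟨x, Finset.mem_filter.mpr ⟨Finset.mem_univ _, hxA⟩, rfl⟩⟩
end
end

section
/- Adding edges to a digraph can only merge or preserve strongly connected components and cannot create new non-top-linked SCCs disjoint from existing ones: if E ⊆ E', then every non-top-linked SCC of D' = (V, E') contains a non-top-linked SCC of D = (V, E) as a subset. -/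
/-- adding edges only merges or preserves SCCs: if `E ⊆ E'`, every
non-top-linked SCC of `(V, E')` contains a non-top-linked SCC of `(V, E)`. -/
theorem stmt_15 {V : Type*} [Fintype V] (E E' : V → V → Prop)
    (hEE : ∀ u v, E u v → E' u v)
    (S' : Set V) (hS' : NonTopLinked E' S') :
    ∃ S : Set V, NonTopLinked E S ∧ S ⊆ S' := by
  obtain ⟨⟨⟨v0, hv0⟩, hmut, hmax⟩, hntl⟩ := hS'
  -- closure: E'-reachability into S' stays in S'
  have hclosed : ∀ u v, Reach E' u v → v ∈ S' → u ∈ S' := by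
    intro u v h
    induction h with
    | refl => exact id
    | tail h1 h2 ih =>
      intro hc
      rename_i b c
      by_cases hb : b ∈ S'
      · exact ih hb
      · exact absurd h2 (hntl b c hc hb)
  -- strict relation is well-founded
  let r : V → V → Prop := fun x y => Reach E x y ∧ ¬ Reach E y x
  have htrans : Transitive r := by
    rintro x y z ⟨h1, h2⟩ ⟨h3, h4⟩
    exact ⟨h1.trans h3, fun h => h2 (h3.trans h)⟩
  have hirr : ∀ x, ¬ r x x := fun x ⟨h1, h2⟩ => h2 h1
  have hwf : WellFounded r := by
    have : IsTrans V r := ⟨htrans⟩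
    have : IsIrrefl V r := ⟨hirr⟩
    exact Finite.wellFounded_of_trans_of_irrefl r
  obtain ⟨m, hmS', hmin⟩ := hwf.has_min S' ⟨v0, hv0⟩
  -- minimality of m: any E-reachable predecessor reaches back
  have hminE : ∀ u, Reach E u m → Reach E m u := by
    intro u h
    by_contra hn
    have huS' : u ∈ S' :=
      hclosed u m (Relation.ReflTransGen.mono (fun a b => hEE a b) u m h) hmS'
    exact hmin u huS' ⟨h, hn⟩
  refine ⟨{u | Reach E m u ∧ Reach E u m}, ⟨⟨⟨m, ⟨.refl, .refl⟩⟩, ?_, ?_⟩, ?_⟩, ?_⟩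
  · rintro a ⟨_, ham⟩ b ⟨hmb, _⟩
    exact ham.trans hmb
  · intro T hsub hT
    apply Set.eq_of_subset_of_subset _ hsub
    intro t ht
    have hm : m ∈ T := hsub ⟨.refl, .refl⟩
    exact ⟨hT m hm t ht, hT t ht m hm⟩
  · rintro u v ⟨hmv, hvm⟩ hu hE
    have hum : Reach E u m := (Relation.ReflTransGen.single hE).trans hvm
    exact hu ⟨hminE u hum, hum⟩
  · rintro u ⟨_, hum⟩
    exact hclosed u m (Relation.ReflTransGen.mono (fun a b => hEE a b) u m hum) hmS'
end

section
/- (Switched DoS resilience, necessity of the SCC condition) For a switched structured system with modes [A_1],…,[A_z] and defender inputs connectable only to X_def, if the union digraph D([A_1] + … + [A_z]) contains a non-top-linked SCC consisting exclusively of vertices of X_att, then there is no choice of defender input matrices [B_{k,def}] (supported on X_def in every mode) making every state reachable from the defender inputs in the union digraph; hence the switched system is not structurally resilient to the DoS attack. -/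
/-- switched DoS resilience, necessity of the SCC condition: if the union
digraph of the modes has a non-top-linked SCC contained in `X_att`, then no defender input
structures supported on `X_def` make every state reachable from the defender inputs in the
union digraph. -/
theorem stmt_16 {X I : Type*} [Fintype X] (z : ℕ) (Ak : Fin z → X → X → Prop)
    (Xdef Xatt : Set X) (hpart : Xdef = Xattᶜ)
    (S : Set X) (hS : NonTopLinked (fun a b => ∃ k, Ak k a b) S) (hSatt : S ⊆ Xatt) :
    ∀ Bdef : Fin z → I → X → Prop, (∀ k i x, Bdef k i x → x ∈ Xdef) →
      ¬ ∀ x : X, ∃ i, ∃ x₀, (∃ k, Bdef k i x₀) ∧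
        Reach (fun a b => ∃ k, Ak k a b) x₀ x := by
  intro Bdef hBdef hall
  set E : X → X → Prop := fun a b => ∃ k, Ak k a b
  obtain ⟨⟨⟨s, hs⟩, _, _⟩, hntl⟩ := hS
  have key : ∀ x₀ y, Reach E x₀ y → y ∈ S → x₀ ∈ S := by
    intro x₀ y h
    induction h using Relation.ReflTransGen.head_induction_on with
    | refl => exact id
    | head hE _ ih =>
      intro hy
      by_contra hx
      exact hntl _ _ (ih hy) hx hE
  obtain ⟨i, x₀, ⟨k, hB⟩, hreach⟩ := hall s
  have hx₀ : x₀ ∈ S := key _ _ hreach hs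
  have := hBdef k i x₀ hB
  rw [hpart] at this
  exact this (hSatt hx₀)
end

section
/- (Switched DoS resilience, necessity of the matching condition) If every maximum matching of the bipartite graph B([[A_1],…,[A_z]]) of the horizontally concatenated mode matrices leaves some vertex of X_att unmatched, then for all defender input structures [B_{k,def}] supported on X_def, the bipartite graph B([[A_1],…,[A_z],[B_{1,def}],…,[B_{z,def}]]) has no matching covering all n state (right) vertices, so the switched system is not structurally controllable with defender inputs alone. -/
open scoped Classical

noncomputable section

/-- Bipartite graph of the horizontal concatenation `[[A_1],…,[A_z]]`: one left vertex per
column of each mode's state matrix, right vertices the states. -/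
def concatModes {X : Type*} [DecidableEq X] (z : ℕ) (EA : Fin z → Finset (X × X)) :
    Finset ((Fin z × X) × X) :=
  (Finset.univ : Finset (Fin z)).biUnion
    (fun k => (EA k).image (fun e => ((k, e.1), e.2)))

/-- Bipartite graph of `[[A_1],…,[A_z],[B_1],…,[B_z]]`. -/
def concatModesAB {X I : Type*} [DecidableEq X] [DecidableEq I] (z : ℕ)
    (EA : Fin z → Finset (X × X)) (EB : Fin z → Finset (I × X)) :
    Finset (((Fin z × X) ⊕ (Fin z × I)) × X) :=
  (concatModes z EA).image (fun e => (Sum.inl e.1, e.2)) ∪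
    (Finset.univ : Finset (Fin z)).biUnion
      (fun k => (EB k).image (fun e => (Sum.inr (k, e.1), e.2)))

lemma exists_max_matching {L R : Type*} (Ed : Finset (L × R)) :
    ∃ N, IsMaxMatching Ed N := by
  classical
  have hne : (Ed.powerset.filter IsMatching).Nonempty := by
    refine ⟨∅, ?_⟩
    simp [IsMatching]
  obtain ⟨N, hN, hmax⟩ := Finset.exists_max_image _ Finset.card hne
  simp only [Finset.mem_filter, Finset.mem_powerset] at hN
  refine ⟨N, ⟨hN.1, hN.2⟩, fun M' hM' => hmax M' ?_⟩
  simp only [Finset.mem_filter, Finset.mem_powerset]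
  exact ⟨hM'.1, hM'.2⟩

lemma exchange {L R : Type*} [DecidableEq L] [DecidableEq R] (Ed : Finset (L × R)) :
    ∀ n (M N : Finset (L × R)), ((M \ N) ∪ (N \ M)).card ≤ n →
    IsMatchingOf Ed M → IsMatchingOf Ed N →
    ∃ N', IsMatchingOf Ed N' ∧ N.card ≤ N'.card ∧
      M.image Prod.snd ⊆ N'.image Prod.snd := by
  intro n
  induction n with
  | zero =>
    intro M N hcard hM hN
    have h0 : (M \ N) ∪ (N \ M) = ∅ := Finset.card_eq_zero.mp (Nat.le_zero.mp hcard)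
    rw [Finset.union_eq_empty] at h0
    have hMN : M = N :=
      Finset.Subset.antisymm (Finset.sdiff_eq_empty_iff_subset.mp h0.1)
        (Finset.sdiff_eq_empty_iff_subset.mp h0.2)
    exact ⟨N, hN, le_rfl, by rw [hMN]⟩
  | succ n ih =>
    intro M N hcard hM hN
    by_cases hsub : M.image Prod.snd ⊆ N.image Prod.snd
    · exact ⟨N, hN, le_rfl, hsub⟩
    · obtain ⟨x, hxM, hxN⟩ := Finset.not_subset.mp hsub
      obtain ⟨e, heM, hex⟩ := Finset.mem_image.mp hxM
      have hxN' : ∀ f ∈ N, f.2 ≠ x := fun f hf h =>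
        hxN (Finset.mem_image.mpr ⟨f, hf, h⟩)
      have heN : e ∉ N := fun h => hxN' e h hex
      have heMN : e ∈ M \ N := Finset.mem_sdiff.mpr ⟨heM, heN⟩
      have hcards : ((M \ N) ∪ (N \ M)).card = (M \ N).card + (N \ M).card :=
        Finset.card_union_of_disjoint disjoint_sdiff_sdiff
      by_cases hf : ∃ f ∈ N, f.1 = e.1
      · obtain ⟨f, hfN, hfe⟩ := hf
        have hfM : f ∉ M := by
          intro hfM
          have hne : e ≠ f := fun h => heN (h ▸ hfN)
          exact (hM.2 e heM f hfM hne).1 hfe.symm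
        have heNf : e ∉ N.erase f := fun h => heN (Finset.mem_of_mem_erase h)
        set N₁ := insert e (N.erase f) with hN₁def
        have hN₁sub : N₁ ⊆ Ed :=
          Finset.insert_subset (hM.1 heM)
            (Finset.Subset.trans (Finset.erase_subset f N) hN.1)
        have hN₁match : IsMatching N₁ := by
          intro g hg h hh hgh
          rw [hN₁def, Finset.mem_insert] at hg hh
          have key : ∀ h', h' ∈ N.erase f → e.1 ≠ h'.1 ∧ e.2 ≠ h'.2 := by
            intro h' hh'
            have hh'N := Finset.mem_of_mem_erase hh'
            have hh'f : h' ≠ f := (Finset.mem_erase.mp hh').1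
            constructor
            · intro h1
              exact (hN.2 h' hh'N f hfN hh'f).1 (h1.symm.trans hfe.symm)
            · intro h2
              exact hxN' h' hh'N (h2.symm.trans hex)
          rcases hg with rfl | hg
          · rcases hh with rfl | hh
            · exact absurd rfl hgh
            · exact key h hh
          · rcases hh with rfl | hh
            · have := key g hg
              exact ⟨this.1.symm, this.2.symm⟩
            · exact hN.2 g (Finset.mem_of_mem_erase hg) h (Finset.mem_of_mem_erase hh) hgh
        have hN₁card : N₁.card = N.card := by
          rw [hN₁def, Finset.card_insert_of_notMem heNf,
            Finset.card_erase_of_mem hfN]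
          have : 1 ≤ N.card := Finset.card_pos.mpr ⟨f, hfN⟩
          omega
        have hsub1 : M \ N₁ ⊆ (M \ N).erase e := by
          intro g hg
          rw [Finset.mem_sdiff] at hg
          have hge : g ≠ e := fun h => hg.2 (h ▸ Finset.mem_insert_self e _)
          refine Finset.mem_erase.mpr ⟨hge, Finset.mem_sdiff.mpr ⟨hg.1, fun hgN => ?_⟩⟩
          have hgf : g ≠ f := fun h => hfM (h ▸ hg.1)
          exact hg.2 (Finset.mem_insert_of_mem (Finset.mem_erase.mpr ⟨hgf, hgN⟩))
        have hsub2 : N₁ \ M ⊆ N \ M := by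
          intro g hg
          rw [Finset.mem_sdiff] at hg ⊢
          refine ⟨?_, hg.2⟩
          rcases Finset.mem_insert.mp hg.1 with rfl | h
          · exact absurd heM hg.2
          · exact Finset.mem_of_mem_erase h
        have hmeas : ((M \ N₁) ∪ (N₁ \ M)).card ≤ n := by
          have h1 : ((M \ N₁) ∪ (N₁ \ M)).card ≤ ((M \ N).erase e).card + (N \ M).card :=
            le_trans (Finset.card_union_le _ _)
              (Nat.add_le_add (Finset.card_le_card hsub1) (Finset.card_le_card hsub2))
          rw [Finset.card_erase_of_mem heMN] at h1
          have hpos : 1 ≤ (M \ N).card := Finset.card_pos.mpr ⟨e, heMN⟩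
          omega
        obtain ⟨N', hN', hcard', hcov⟩ := ih M N₁ hmeas hM ⟨hN₁sub, hN₁match⟩
        exact ⟨N', hN', hN₁card ▸ hcard', hcov⟩
      · push_neg at hf
        set N₁ := insert e N with hN₁def
        have heN₁ : e ∉ N := heN
        have hN₁sub : N₁ ⊆ Ed := Finset.insert_subset (hM.1 heM) hN.1
        have hN₁match : IsMatching N₁ := by
          intro g hg h hh hgh
          rw [hN₁def, Finset.mem_insert] at hg hh
          have key : ∀ h', h' ∈ N → e.1 ≠ h'.1 ∧ e.2 ≠ h'.2 := by
            intro h' hh'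
            exact ⟨fun h1 => hf h' hh' h1.symm, fun h2 => hxN' h' hh' (h2.symm.trans hex)⟩
          rcases hg with rfl | hg
          · rcases hh with rfl | hh
            · exact absurd rfl hgh
            · exact key h hh
          · rcases hh with rfl | hh
            · have := key g hg
              exact ⟨this.1.symm, this.2.symm⟩
            · exact hN.2 g hg h hh hgh
        have hsub1 : M \ N₁ ⊆ (M \ N).erase e := by
          intro g hg
          rw [Finset.mem_sdiff] at hg
          have hge : g ≠ e := fun h => hg.2 (h ▸ Finset.mem_insert_self e _)
          exact Finset.mem_erase.mpr ⟨hge, Finset.mem_sdiff.mpr ⟨hg.1,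
            fun hgN => hg.2 (Finset.mem_insert_of_mem hgN)⟩⟩
        have hsub2 : N₁ \ M ⊆ N \ M := by
          intro g hg
          rw [Finset.mem_sdiff] at hg ⊢
          rcases Finset.mem_insert.mp hg.1 with rfl | h
          · exact absurd heM hg.2
          · exact ⟨h, hg.2⟩
        have hmeas : ((M \ N₁) ∪ (N₁ \ M)).card ≤ n := by
          have h1 : ((M \ N₁) ∪ (N₁ \ M)).card ≤ ((M \ N).erase e).card + (N \ M).card :=
            le_trans (Finset.card_union_le _ _)
              (Nat.add_le_add (Finset.card_le_card hsub1) (Finset.card_le_card hsub2))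
          rw [Finset.card_erase_of_mem heMN] at h1
          have hpos : 1 ≤ (M \ N).card := Finset.card_pos.mpr ⟨e, heMN⟩
          omega
        obtain ⟨N', hN', hcard', hcov⟩ := ih M N₁ hmeas hM ⟨hN₁sub, hN₁match⟩
        refine ⟨N', hN', le_trans ?_ hcard', hcov⟩
        rw [hN₁def, Finset.card_insert_of_notMem heN₁]
        omega

/-- switched DoS resilience, necessity of the matching condition: if every
maximum matching of `B([[A_1],…,[A_z]])` leaves some `X_att` vertex unmatched, then for
all defender input structures supported on `X_def`, the concatenated bipartite graph has
no matching covering all state vertices. -/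
theorem stmt_17 {X I : Type*} [Fintype X] (z : ℕ) (EA : Fin z → Finset (X × X))
    (Xdef Xatt : Set X) (hpart : Xdef = Xattᶜ)
    (hA : ∀ M : Finset ((Fin z × X) × X), IsMaxMatching (concatModes z EA) M →
      ∃ x ∈ unmatchedR M, x ∈ Xatt) :
    ∀ EB : Fin z → Finset (I × X), (∀ k, ∀ e ∈ EB k, e.2 ∈ Xdef) →
      ¬ ∃ M : Finset (((Fin z × X) ⊕ (Fin z × I)) × X),
          IsMatchingOf (concatModesAB z EA EB) M ∧ ∀ x : X, ∃ e ∈ M, e.2 = x := by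
  classical
  rintro EB hEB ⟨M, ⟨hMsub, hMmatch⟩, hMperf⟩
  set MA : Finset ((Fin z × X) × X) :=
    Finset.univ.filter (fun e => (Sum.inl e.1, e.2) ∈ M) with hMAdef
  have hmemMA : ∀ e : (Fin z × X) × X, e ∈ MA ↔ (Sum.inl e.1, e.2) ∈ M := by
    intro e; simp [hMAdef]
  -- MA ⊆ concatModes
  have hMAsub : MA ⊆ concatModes z EA := by
    intro e he
    have hM' := hMsub ((hmemMA e).mp he)
    rw [concatModesAB, Finset.mem_union] at hM'
    rcases hM' with h | h
    · obtain ⟨a, ha, hae⟩ := Finset.mem_image.mp h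
      obtain ⟨h1', h2⟩ := Prod.ext_iff.mp hae
      have : a = e := Prod.ext (Sum.inl.inj h1') h2
      exact this ▸ ha
    · exfalso
      obtain ⟨k, _, hk⟩ := Finset.mem_biUnion.mp h
      obtain ⟨b, _, hbe⟩ := Finset.mem_image.mp hk
      exact Sum.inr_ne_inl (congrArg Prod.fst hbe)
  have hMAmatch : IsMatching MA := by
    intro e he f hf hef
    have h := hMmatch _ ((hmemMA e).mp he) _ ((hmemMA f).mp hf)
      (fun h => hef (Prod.ext (Sum.inl.inj (Prod.ext_iff.mp h).1) (Prod.ext_iff.mp h).2))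
    exact ⟨fun h1 => h.1 (by rw [h1]), h.2⟩
  -- MA covers Xatt on the right
  have hcovatt : ∀ x ∈ Xatt, x ∈ MA.image Prod.snd := by
    intro x hx
    obtain ⟨e, heM, hex⟩ := hMperf x
    rcases he1 : e.1 with l | ki
    · refine Finset.mem_image.mpr ⟨(l, x), ?_, rfl⟩
      rw [hmemMA]
      have : e = (Sum.inl l, x) := Prod.ext he1 hex
      exact this ▸ heM
    · exfalso
      have hM' := hMsub heM
      rw [concatModesAB, Finset.mem_union] at hM'
      rcases hM' with h | h
      · obtain ⟨a, _, hae⟩ := Finset.mem_image.mp h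
        rw [← hae] at he1
        exact Sum.inl_ne_inr he1
      · obtain ⟨k, _, hk⟩ := Finset.mem_biUnion.mp h
        obtain ⟨b, hb, hbe⟩ := Finset.mem_image.mp hk
        have hxdef : b.2 ∈ Xdef := hEB k b hb
        have : b.2 = x := (congrArg Prod.snd hbe).trans hex
        rw [this, hpart] at hxdef
        exact hxdef hx
  obtain ⟨N, hNmax⟩ := exists_max_matching (concatModes z EA)
  obtain ⟨N', hN', hcard', hcov⟩ := exchange (concatModes z EA)
    ((MA \ N) ∪ (N \ MA)).card MA N le_rfl ⟨hMAsub, hMAmatch⟩ hNmax.1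
  have hN'max : IsMaxMatching (concatModes z EA) N' :=
    ⟨hN', fun M' hM' => le_trans (hNmax.2 M' hM') hcard'⟩
  obtain ⟨x, hxu, hxatt⟩ := hA N' hN'max
  have hxcov : x ∈ N'.image Prod.snd := hcov (hcovatt x hxatt)
  obtain ⟨e, heN', hex⟩ := Finset.mem_image.mp hxcov
  simp only [unmatchedR, Finset.mem_filter] at hxu
  exact hxu.2 e heN' hex
end
end
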